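/- Let G = (V,E) be a hypergraph with n := |V| ≥ 3 such that the set of maximal edges of G consists exactly of all subsets of V of cardinality n − 1. Then CER(G) is not an extension of MP(G). -/

import Mathlib

open Finset

namespace BPO

variable {N : Type*} [DecidableEq N]

/-- Coordinate index set of `ℝ^{V ∪ E}`: one coordinate for each edge, and one
coordinate (labelled by the corresponding singleton) for each node. -/
def coords (V : Finset N) (E : Finset (Finset N)) : Finset (Finset N) :=
  E ∪ V.image fun v => {v}

/-- A point of `ℝ^{V ∪ E}`. -/
abbrev Pt (V : Finset N) (E : Finset (Finset N)) : Type _ :=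
  {p : Finset N // p ∈ coords V E} → ℝ

/-- Evaluate a coordinate of a point, with the convention `z_∅ = 1`.
For a node `v`, the coordinate `z_v` is `ev z {v}`. -/
noncomputable def ev {V : Finset N} {E : Finset (Finset N)} (z : Pt V E)
    (p : Finset N) : ℝ :=
  if h : p ∈ coords V E then z ⟨p, h⟩ else if p = ∅ then 1 else 0

/-- The multilinear set `S(G)`: binary points with `z_e = ∏_{v ∈ e} z_v`. -/
def mlSet (V : Finset N) (E : Finset (Finset N)) : Set (Pt V E) :=
  { z | (∀ p, z p = 0 ∨ z p = 1) ∧ ∀ e ∈ E, ev z e = ∏ v ∈ e, ev z {v} }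

/-- The multilinear polytope `MP(G)`. -/
noncomputable def MP (V : Finset N) (E : Finset (Finset N)) : Set (Pt V E) :=
  convexHull ℝ (mlSet V E)

/-- The completion `cl(E) = { f ⊆ e : |f| ≥ 2, e ∈ E }`. -/
def clE (E : Finset (Finset N)) : Finset (Finset N) :=
  (E.biUnion Finset.powerset).filter fun g => 2 ≤ g.card

/-- The set of maximal edges of `E`. -/
def maxEdges (E : Finset (Finset N)) : Finset (Finset N) :=
  E.filter fun e => ∀ e' ∈ E, e ⊆ e' → e = e'

/-- The linear function `ψ(U, e)`. -/
noncomputable def psi {V : Finset N} {E : Finset (Finset N)} (z : Pt V E)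
    (U e : Finset N) : ℝ :=
  ∑ W ∈ U.powerset, (if Even W.card then (1 : ℝ) else -1) * ev z ((e \ U) ∪ W)

/-- The complete edge relaxation constraints (`ψ(U,e) ≥ 0` for `U ⊆ e`, `e` a
maximal edge of `E`), imposed on the coordinate space `ℝ^{V ∪ F}`. -/
noncomputable def cerSet (V : Finset N) (E F : Finset (Finset N)) : Set (Pt V F) :=
  { z | ∀ e ∈ maxEdges E, ∀ U ⊆ e, 0 ≤ psi z U e }

/-- The complete edge relaxation `CER(G) ⊆ ℝ^{V ∪ cl(E)}`. -/
noncomputable def CER (V : Finset N) (E : Finset (Finset N)) : Set (Pt V (clE E)) :=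
  cerSet V E (clE E)

/-- Projection onto the coordinates of `ℝ^{V₂ ∪ E₂}`. -/
noncomputable def res (V₂ : Finset N) (E₂ : Finset (Finset N)) {V₁ : Finset N}
    {E₁ : Finset (Finset N)} (z : Pt V₁ E₁) : Pt V₂ E₂ :=
  fun p => ev z p.1

/-- `CER(G)` is an extension of `MP(G)`: `MP(G)` is the image of `CER(G)` under
the projection of `ℝ^{V ∪ cl(E)}` onto `ℝ^{V ∪ E}`. -/
def IsExtension (V : Finset N) (E : Finset (Finset N)) : Prop :=
  MP V E = (fun z : Pt V (clE E) => res V E z) '' CER V E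

/-- The running intersection property for the family `E`. -/
def RunningIntersection (E : Finset (Finset N)) : Prop :=
  ∃ L : List (Finset N), L.Nodup ∧ L.toFinset = E ∧
    ∀ k, 0 < k → k < L.length →
      ∃ j < k, L.getD k ∅ ∩ (L.take k).foldr (· ∪ ·) ∅ ⊆ L.getD j ∅

/-- A hypergraph is α-acyclic if its edge set has the running intersection property. -/
def AlphaAcyclic (E : Finset (Finset N)) : Prop := RunningIntersection E

/-- `s_i = e_i ∩ e_{i+1}` for a cyclic sequence `e_1, …, e_ℓ, e_{ℓ+1} = e_1`. -/
def cycS (c : ℕ → Finset N) (ℓ i : ℕ) : Finset N :=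
  c i ∩ c (if i = ℓ then 1 else i + 1)

/-- A simple cycle `e_1, …, e_ℓ, e_{ℓ+1} = e_1` of length `ℓ`. -/
def IsSimpleCycle (E : Finset (Finset N)) (ℓ : ℕ) (c : ℕ → Finset N) : Prop :=
  3 ≤ ℓ ∧ (∀ i, 1 ≤ i → i ≤ ℓ → c i ∈ E) ∧
    ∀ i j k, 1 ≤ i → i < j → j < k → k ≤ ℓ → ∀ e ∈ E,
      ((cycS c ℓ i ∪ cycS c ℓ j ∪ cycS c ℓ k) \ e).Nonempty

/-- An α-cycle `e_1, …, e_ℓ, e_{ℓ+1} = e_1` of length `ℓ`. -/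
def IsAlphaCycle (E : Finset (Finset N)) (ℓ : ℕ) (c : ℕ → Finset N) : Prop :=
  3 ≤ ℓ ∧ (∀ i, 1 ≤ i → i ≤ ℓ → c i ∈ E) ∧
    (∀ i j, 1 ≤ i → i ≤ ℓ → 1 ≤ j → j ≤ ℓ → i ≠ j → (c i \ c j).Nonempty) ∧
    ∀ i, 1 ≤ i → i ≤ ℓ → ∀ e ∈ E,
      ((cycS c ℓ (if i = 1 then ℓ else i - 1) ∪ cycS c ℓ i ∪
        cycS c ℓ (if i = ℓ then 1 else i + 1)) \ e).Nonempty

/-- A chordless α-cycle: no subsequence `e_i, …, e_j, ẽ, e_i` is an α-cycle. -/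
def Chordless (E : Finset (Finset N)) (ℓ : ℕ) (c : ℕ → Finset N) : Prop :=
  ∀ i j, 1 ≤ i → i < j → j ≤ ℓ → j - i ≤ ℓ - 3 →
    ∀ g ∈ E, (∀ k, i ≤ k → k ≤ j → g ≠ c k) →
      ¬ IsAlphaCycle E (j - i + 2) fun k => if k ≤ j - i + 1 then c (i + k - 1) else g

/-- The edge set `E_{V'}` of the subhypergraph induced by `W`. -/
def indE (E : Finset (Finset N)) (W : Finset N) : Finset (Finset N) :=
  (E.image fun e => e ∩ W).filter fun g => 2 ≤ g.card

/-- The edge set `E_{w→u}` obtained by contracting `w` to `u`. -/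
def contrE (E : Finset (Finset N)) (u w : N) : Finset (Finset N) :=
  E.filter (fun e => w ∉ e) ∪
    (E.filter fun e => w ∈ e ∧ e ≠ {u, w}).image fun e => e.erase w ∪ {u}

/-- The edge set `E'` obtained by expanding `w` to `f`. -/
def expE (E : Finset (Finset N)) (w : N) (f : Finset N) : Finset (Finset N) :=
  insert f
    (E.filter (fun e => w ∉ e) ∪ (E.filter fun e => w ∈ e).image fun e => e.erase w ∪ f)

/-- The coordinate renaming `x_w → z_f`, `x_v → z_v`, `x_e → z_e` (`w ∉ e`),
`x_e → z_{(e∖{w}) ⊎ f}` (`w ∈ e`) used in the expansion operation. -/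
def expRen (w : N) (f : Finset N) (p : Finset N) : Finset N :=
  if p = {w} then f else if w ∈ p then p.erase w ∪ f else p

/-- The CER point used in the proof of Statement 16. -/
noncomputable def zpt (V : Finset N) (E : Finset (Finset N)) (m : ℕ) : Pt V (clE E) :=
  fun p => 1 - (p.1.card : ℝ) / (m : ℝ)

lemma sign_sum (U : Finset N) :
    ∑ W ∈ U.powerset, ((-1 : ℝ)) ^ W.card = if U = ∅ then 1 else 0 := by
  have h := Finset.sum_powerset_neg_one_pow_card (x := U)
  calc ∑ W ∈ U.powerset, ((-1 : ℝ)) ^ W.card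
      = ((∑ W ∈ U.powerset, ((-1 : ℤ)) ^ W.card : ℤ) : ℝ) := by push_cast; rfl
    _ = _ := by rw [h]; split <;> norm_num

lemma sign_card_sum (U : Finset N) :
    ∑ W ∈ U.powerset, ((-1 : ℝ)) ^ W.card * (W.card : ℝ)
      = if U.card = 1 then -1 else 0 := by
  rcases U.eq_empty_or_nonempty with h | h
  · subst h; simp
  · obtain ⟨a, ha⟩ := h
    have hrep : U = insert a (U.erase a) := (Finset.insert_erase ha).symm
    have hna : a ∉ U.erase a := Finset.notMem_erase a U
    rw [hrep, Finset.sum_powerset_insert hna, ← Finset.sum_add_distrib]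
    have hstep : ∀ W ∈ (U.erase a).powerset,
        ((-1:ℝ))^W.card * (W.card : ℝ)
          + ((-1:ℝ))^(insert a W).card * ((insert a W).card : ℝ)
          = -((-1:ℝ))^W.card := by
      intro W hW
      have haW : a ∉ W := fun h' => hna (Finset.mem_powerset.mp hW h')
      rw [Finset.card_insert_of_notMem haW]
      push_cast
      ring
    rw [Finset.sum_congr rfl hstep, Finset.sum_neg_distrib, sign_sum,
      Finset.card_insert_of_notMem hna]
    by_cases h0 : U.erase a = ∅
    · simp [h0]
    · have : (U.erase a).card ≠ 0 := fun hc => h0 (Finset.card_eq_zero.mp hc)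
      rw [if_neg h0, if_neg (by omega)]
      norm_num

theorem stmt16 {N : Type*} [DecidableEq N] (V : Finset N) (E : Finset (Finset N))
    (hcard : ∀ e ∈ E, 2 ≤ e.card) (hVsub : ∀ e ∈ E, e ⊆ V)
    (hcover : ∀ v ∈ V, ∃ e ∈ E, v ∈ e)
    (hn : 3 ≤ V.card)
    (hmax : maxEdges E = V.powerset.filter fun e => e.card = V.card - 1) :
    ¬ IsExtension V E := by
  intro hext
  set n := V.card with hn_def
  set m := n - 1 with hm_def
  have hm2 : 2 ≤ m := by omega
  have hmR : (0:ℝ) < (m:ℝ) := by exact_mod_cast Nat.lt_of_lt_of_le (by norm_num) hm2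
  set z : Pt V (clE E) := zpt V E m with hz_def
  have hmaxE : ∀ e ∈ maxEdges E, e ∈ E := fun e he => (Finset.mem_filter.mp he).1
  have hmaxmem : ∀ e ∈ maxEdges E, e ⊆ V ∧ e.card = m := by
    intro e he
    rw [hmax, Finset.mem_filter, Finset.mem_powerset] at he
    exact ⟨he.1, he.2⟩
  -- value of `ev z` on subsets of maximal edges
  have hevz : ∀ e ∈ maxEdges E, ∀ q ⊆ e, ev z q = 1 - (q.card : ℝ) / (m : ℝ) := by
    intro e he q hq
    by_cases hc : q ∈ coords V (clE E)
    · rw [ev, dif_pos hc]; rfl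
    · have hqe : q = ∅ := by
        by_contra hne
        apply hc
        rcases Nat.lt_or_ge q.card 2 with h2 | h2
        · have h1 : q.card = 1 := by
            have : 1 ≤ q.card := Finset.card_pos.mpr (Finset.nonempty_of_ne_empty hne)
            omega
          obtain ⟨v, hv⟩ := Finset.card_eq_one.mp h1
          subst hv
          have hvV : v ∈ V := hVsub e (hmaxE e he) (hq (Finset.mem_singleton_self v))
          exact Finset.mem_union_right _ (Finset.mem_image_of_mem _ hvV)
        · refine Finset.mem_union_left _ (Finset.mem_filter.mpr ⟨?_, h2⟩)
          exact Finset.mem_biUnion.mpr ⟨e, hmaxE e he, Finset.mem_powerset.mpr hq⟩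
      subst hqe
      rw [ev, dif_neg hc, if_pos rfl]
      simp
  -- z is in CER
  have hzCER : z ∈ CER V E := by
    simp only [CER, cerSet, Set.mem_setOf_eq]
    intro e he U hU
    have hecard := (hmaxmem e he).2
    have hterm : ∀ W ∈ U.powerset,
        (if Even W.card then (1:ℝ) else -1) * ev z ((e \ U) ∪ W)
          = (1 - ((e\U).card : ℝ)/(m:ℝ)) * ((-1:ℝ)^W.card)
            - (1/(m:ℝ)) * ((-1:ℝ)^W.card * (W.card : ℝ)) := by
      intro W hW
      have hWU : W ⊆ U := Finset.mem_powerset.mp hW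
      have hsub : (e \ U) ∪ W ⊆ e :=
        Finset.union_subset (Finset.sdiff_subset) (hWU.trans hU)
      have hdisj : Disjoint (e \ U) W := Finset.sdiff_disjoint.mono_right hWU
      have hcu : ((e \ U) ∪ W).card = (e \ U).card + W.card :=
        Finset.card_union_of_disjoint hdisj
      rw [hevz e he _ hsub, hcu]
      have hsgn : (if Even W.card then (1:ℝ) else -1) = (-1:ℝ)^W.card := by
        rcases Nat.even_or_odd W.card with h | h
        · rw [if_pos h, h.neg_one_pow]
        · rw [if_neg (by rwa [← Nat.not_even_iff_odd] at h), h.neg_one_pow]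
      rw [hsgn]
      push_cast
      ring
    rw [psi, Finset.sum_congr rfl hterm, Finset.sum_sub_distrib, ← Finset.mul_sum,
      ← Finset.mul_sum, sign_sum, sign_card_sum]
    by_cases hU0 : U = ∅
    · subst hU0
      rw [if_pos rfl, if_neg (by simp), Finset.sdiff_empty, hecard,
        div_self (ne_of_gt hmR)]
      norm_num
    · rw [if_neg hU0]
      by_cases hU1 : U.card = 1
      · rw [if_pos hU1]
        have h1 : (0:ℝ) < 1/(m:ℝ) := by positivity
        nlinarith
      · rw [if_neg hU1]
        simp
  -- the projected point is in MP
  have hyMP : res V E z ∈ MP V E := by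
    rw [show MP V E = (fun z : Pt V (clE E) => res V E z) '' CER V E from hext]
    exact ⟨z, hzCER, rfl⟩
  -- the separating halfspace
  set H : Set (Pt V E) := {w | 0 ≤ (∑ e ∈ maxEdges E, ev w e)
      - (∑ v ∈ V, ev w {v}) + ((n:ℝ) - 2)} with hH_def
  have hev_affine : ∀ (a b : ℝ), a + b = 1 → ∀ (w₁ w₂ : Pt V E) (p : Finset N),
      ev (a • w₁ + b • w₂) p = a * ev w₁ p + b * ev w₂ p := by
    intro a b hab w₁ w₂ p
    by_cases h : p ∈ coords V E
    · rw [ev, ev, ev, dif_pos h, dif_pos h, dif_pos h]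
      simp
    · by_cases hp : p = ∅
      · rw [ev, ev, ev, dif_neg h, dif_neg h, dif_neg h, if_pos hp]
        linarith
      · rw [ev, ev, ev, dif_neg h, dif_neg h, dif_neg h, if_neg hp]
        ring
  have hconv : Convex ℝ H := by
    intro w₁ h₁ w₂ h₂ a b ha hb hab
    simp only [hH_def, Set.mem_setOf_eq] at h₁ h₂ ⊢
    have e1 : ∑ e ∈ maxEdges E, ev (a • w₁ + b • w₂) e
        = a * (∑ e ∈ maxEdges E, ev w₁ e) + b * (∑ e ∈ maxEdges E, ev w₂ e) := by
      rw [Finset.mul_sum, Finset.mul_sum, ← Finset.sum_add_distrib]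
      exact Finset.sum_congr rfl fun e _ => hev_affine a b hab w₁ w₂ e
    have e2 : ∑ v ∈ V, ev (a • w₁ + b • w₂) {v}
        = a * (∑ v ∈ V, ev w₁ {v}) + b * (∑ v ∈ V, ev w₂ {v}) := by
      rw [Finset.mul_sum, Finset.mul_sum, ← Finset.sum_add_distrib]
      exact Finset.sum_congr rfl fun v _ => hev_affine a b hab w₁ w₂ {v}
    rw [e1, e2]
    nlinarith [mul_nonneg ha h₁, mul_nonneg hb h₂]
  -- the multilinear set lies in the halfspace
  have hsub : mlSet V E ⊆ H := by
    rintro w ⟨hbin, hmul⟩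
    set T := V.filter (fun v => ev w {v} = 1) with hT_def
    have hTV : T ⊆ V := Finset.filter_subset _ _
    have hnode : ∀ v ∈ V, ev w {v} = if v ∈ T then 1 else 0 := by
      intro v hv
      have hvc : ({v} : Finset N) ∈ coords V E :=
        Finset.mem_union_right _ (Finset.mem_image_of_mem _ hv)
      by_cases ht : v ∈ T
      · rw [if_pos ht]
        exact (Finset.mem_filter.mp ht).2
      · rw [if_neg ht]
        rcases hbin ⟨{v}, hvc⟩ with h0 | h1
        · rw [ev, dif_pos hvc]; exact h0
        · exact absurd
            (Finset.mem_filter.mpr ⟨hv, by rw [ev, dif_pos hvc]; exact h1⟩) ht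
    have hsumv : ∑ v ∈ V, ev w {v} = (T.card : ℝ) := by
      rw [Finset.sum_congr rfl hnode, Finset.sum_boole]
      congr 1
      rw [Finset.filter_mem_eq_inter, Finset.inter_eq_right.mpr hTV]
    have hedge : ∀ e ∈ maxEdges E, ev w e = if e ⊆ T then 1 else 0 := by
      intro e he
      rw [hmul e (hmaxE e he)]
      by_cases hsT : e ⊆ T
      · rw [if_pos hsT]
        exact Finset.prod_eq_one fun v hv => by
          rw [hnode v ((hmaxmem e he).1 hv), if_pos (hsT hv)]
      · rw [if_neg hsT]
        obtain ⟨v, hve, hvT⟩ := Finset.not_subset.mp hsT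
        exact Finset.prod_eq_zero hve
          (by rw [hnode v ((hmaxmem e he).1 hve), if_neg hvT])
    have hsume : ∑ e ∈ maxEdges E, ev w e
        = (((maxEdges E).filter (· ⊆ T)).card : ℝ) := by
      rw [Finset.sum_congr rfl hedge, Finset.sum_boole]
    simp only [hH_def, Set.mem_setOf_eq]
    rw [hsume, hsumv]
    set K := ((maxEdges E).filter (· ⊆ T)).card with hK_def
    have hTcard : T.card ≤ n := hn_def ▸ Finset.card_le_card hTV
    rcases Nat.lt_or_ge T.card (n-1) with hlt | hge
    · have hK0 : (0:ℝ) ≤ (K:ℝ) := Nat.cast_nonneg _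
      have h2 : T.card + 2 ≤ n := by omega
      have h2' : (T.card : ℝ) + 2 ≤ (n : ℝ) := by exact_mod_cast h2
      linarith
    · have hcase : T.card = n - 1 ∨ T.card = n := by omega
      rcases hcase with hc | hc
      · have hTmax : T ∈ maxEdges E := by
          rw [hmax]
          exact Finset.mem_filter.mpr ⟨Finset.mem_powerset.mpr hTV, hc⟩
        have hK1 : 1 ≤ K := Finset.card_pos.mpr
          ⟨T, Finset.mem_filter.mpr ⟨hTmax, subset_rfl⟩⟩
        have hK1' : (1:ℝ) ≤ (K:ℝ) := by exact_mod_cast hK1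
        have hTc' : (T.card : ℝ) = (n:ℝ) - 1 := by
          rw [hc]
          have : (1:ℕ) ≤ n := by omega
          push_cast [Nat.cast_sub this]
          ring
        linarith
      · have hTeq : T = V := Finset.eq_of_subset_of_card_le hTV (by omega)
        obtain ⟨v₁, hv₁, v₂, hv₂, hne⟩ := Finset.one_lt_card.mp
          (show 1 < V.card by omega)
        have he₁ : V.erase v₁ ∈ maxEdges E := by
          rw [hmax]
          exact Finset.mem_filter.mpr ⟨Finset.mem_powerset.mpr (Finset.erase_subset _ _),
            by rw [Finset.card_erase_of_mem hv₁]⟩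
        have he₂ : V.erase v₂ ∈ maxEdges E := by
          rw [hmax]
          exact Finset.mem_filter.mpr ⟨Finset.mem_powerset.mpr (Finset.erase_subset _ _),
            by rw [Finset.card_erase_of_mem hv₂]⟩
        have hne12 : V.erase v₁ ≠ V.erase v₂ := by
          intro hcontr
          have : v₁ ∈ V.erase v₂ := Finset.mem_erase.mpr ⟨hne, hv₁⟩
          rw [← hcontr] at this
          exact (Finset.notMem_erase v₁ V) this
        have hss : ({V.erase v₁, V.erase v₂} : Finset (Finset N))
            ⊆ (maxEdges E).filter (· ⊆ T) := by
          intro x hx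
          rcases Finset.mem_insert.mp hx with h | h
          · subst h
            exact Finset.mem_filter.mpr ⟨he₁, hTeq ▸ Finset.erase_subset _ _⟩
          · rw [Finset.mem_singleton.mp h]
            exact Finset.mem_filter.mpr ⟨he₂, hTeq ▸ Finset.erase_subset _ _⟩
        have hK2 : 2 ≤ K := by
          rw [hK_def, ← Finset.card_pair hne12]
          exact Finset.card_le_card hss
        have hK2' : (2:ℝ) ≤ (K:ℝ) := by exact_mod_cast hK2
        have hTc' : (T.card : ℝ) = (n:ℝ) := by rw [hc]
        linarith
  -- membership of the projection in the halfspace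
  have h0 : res V E z ∈ H := convexHull_min hsub hconv hyMP
  -- compute the value of the linear functional at the projection
  have hcoords_sub : ∀ p, p ∈ coords V E → p ∈ coords V (clE E) := by
    intro p hp
    rcases Finset.mem_union.mp hp with hpE | hpv
    · exact Finset.mem_union_left _ (Finset.mem_filter.mpr
        ⟨Finset.mem_biUnion.mpr ⟨p, hpE, Finset.mem_powerset_self p⟩, hcard p hpE⟩)
    · exact Finset.mem_union_right _ hpv
  have hres : ∀ p (hp : p ∈ coords V E),
      ev (res V E z) p = 1 - (p.card : ℝ) / (m : ℝ) := by
    intro p hp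
    rw [ev, dif_pos hp]
    show ev z p = _
    rw [ev, dif_pos (hcoords_sub p hp)]
    rfl
  have hs1 : ∑ e ∈ maxEdges E, ev (res V E z) e = 0 := by
    apply Finset.sum_eq_zero
    intro e he
    rw [hres e (Finset.mem_union_left _ (hmaxE e he)), (hmaxmem e he).2,
      div_self (ne_of_gt hmR)]
    ring
  have hs2 : ∑ v ∈ V, ev (res V E z) {v} = (n:ℝ) * (1 - 1/(m:ℝ)) := by
    have : ∀ v ∈ V, ev (res V E z) {v} = 1 - 1/(m:ℝ) := by
      intro v hv
      rw [hres {v} (Finset.mem_union_right _ (Finset.mem_image_of_mem _ hv))]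
      norm_num
    rw [Finset.sum_congr rfl this, Finset.sum_const, nsmul_eq_mul]
  simp only [hH_def, Set.mem_setOf_eq] at h0
  rw [hs1, hs2] at h0
  -- derive the contradiction
  have hn3 : (3:ℝ) ≤ (n:ℝ) := by exact_mod_cast hn
  have hmn : (m:ℝ) = (n:ℝ) - 1 := by
    rw [hm_def]
    have h1 : (1:ℕ) ≤ n := by omega
    push_cast [Nat.cast_sub h1]
    ring
  rw [hmn] at h0 hmR
  have key : 1/((n:ℝ)-1) * ((n:ℝ)-1) = 1 := by
    field_simp
  nlinarith [h0, key, hn3, hmR]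

end BPO
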